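/- Let (C, n) be a finite-dimensional composition algebra over a field k of characteristic not two, and let a, b ∈ C be anisotropic (n(a) ≠ 0, n(b) ≠ 0). Then the left multiplication operator L_a is a proper similarity if and only if L_b is, and R_a is proper if and only if R_b is. Consequently the double sign (sgn(L_c), sgn(R_c)) is independent of the choice of anisotropic c ∈ C. -/

import Mathlib

open Polynomial Matrix Module

private theorem comp_sign_aux {k C : Type*} [Field k] (hchar : (2 : k) ≠ 0)
    [AddCommGroup C] [Module k C] [FiniteDimensional k C]
    (heven : Even (Module.finrank k C))
    (n : QuadraticForm k C)
    (hnd : ∀ x : C, (∀ y : C, QuadraticMap.polar n x y = 0) → x = 0)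
    (mul : C →ₗ[k] C →ₗ[k] C)
    (hcomp : ∀ x y : C, n (mul x y) = n x * n y)
    (a b : C) (ha : n a ≠ 0) (hb : n b ≠ 0) :
    ((LinearMap.det (mul a) = n a ^ (Module.finrank k C / 2)) ↔
      (LinearMap.det (mul b) = n b ^ (Module.finrank k C / 2))) := by
  classical
  set d := Module.finrank k C with hd
  set m := d / 2 with hm
  have hm2 : m * 2 = d := Nat.div_mul_cancel heven.two_dvd
  -- Polarized composition identities
  have I1 : ∀ x y w : C, QuadraticMap.polar n (mul x y) (mul x w)
      = n x * QuadraticMap.polar n y w := by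
    intro x y w
    have h1 : n (mul x y + mul x w) = n x * n (y + w) := by
      rw [← map_add, hcomp]
    simp only [QuadraticMap.polar, h1, hcomp]
    ring
  have I2 : ∀ x z y w : C,
      QuadraticMap.polar n (mul x y) (mul z w) + QuadraticMap.polar n (mul z y) (mul x w)
        = QuadraticMap.polar n x z * QuadraticMap.polar n y w := by
    intro x z y w
    have hx := I1 (x + z) y w
    rw [show mul (x + z) = mul x + mul z from map_add mul x z] at hx
    simp only [LinearMap.add_apply] at hx
    rw [QuadraticMap.polar_add_left, QuadraticMap.polar_add_right,
      QuadraticMap.polar_add_right] at hx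
    have hxz : n (x + z) = QuadraticMap.polar n x z + n x + n z := by
      rw [QuadraticMap.polar]; ring
    rw [hxz] at hx
    have h1 := I1 x y w
    have h2 := I1 z y w
    linear_combination hx - h1 - h2
  -- bilinear form level
  set P : LinearMap.BilinForm k C := n.polarBilin with hP
  have hPapp : ∀ x y : C, P x y = QuadraticMap.polar n x y := fun x y => rfl
  have hc : ∀ u v : C, P.comp (mul u) (mul v) + P.comp (mul v) (mul u)
      = (QuadraticMap.polar n u v) • P := by
    intro u v
    ext x y
    simp only [LinearMap.add_apply, LinearMap.BilinForm.comp_apply, LinearMap.smul_apply,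
      smul_eq_mul, hPapp]
    exact I2 u v x y
  have hcc : ∀ u : C, P.comp (mul u) (mul u) = n u • P := by
    intro u
    ext x y
    simp only [LinearMap.BilinForm.comp_apply, LinearMap.smul_apply, smul_eq_mul, hPapp]
    exact I1 u x y
  -- matrices
  set bs : Basis (Fin d) k C := Module.finBasis k C with hbs
  set G : Matrix (Fin d) (Fin d) k := LinearMap.BilinForm.toMatrix bs P with hG
  set A : Matrix (Fin d) (Fin d) k := LinearMap.toMatrix bs bs (mul a) with hA
  set B : Matrix (Fin d) (Fin d) k := LinearMap.toMatrix bs bs (mul b) with hB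
  have hGA : Aᵀ * G * A = n a • G := by
    rw [hA, hG, ← LinearMap.BilinForm.toMatrix_comp bs bs, hcc a, _root_.map_smul]
  have hGB : Bᵀ * G * B = n b • G := by
    rw [hB, hG, ← LinearMap.BilinForm.toMatrix_comp bs bs, hcc b, _root_.map_smul]
  have hGAB : Aᵀ * G * B + Bᵀ * G * A = (QuadraticMap.polar n a b) • G := by
    rw [hA, hB, hG, ← LinearMap.BilinForm.toMatrix_comp bs bs, ← LinearMap.BilinForm.toMatrix_comp bs bs,
      ← map_add, hc a b, _root_.map_smul]
  have hdetG : G.det ≠ 0 := by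
    have hPnd : P.Nondegenerate := by
      refine ⟨fun x hx => hnd x fun y => hx y, fun x hx => hnd x fun y => ?_⟩
      exact (QuadraticMap.polar_comm n x y).trans (hx y)
    exact ((LinearMap.BilinForm.nondegenerate_iff_det_ne_zero bs).mp hPnd)
  -- polynomial matrices
  set CC : k →+* k[X] := Polynomial.C with hCC
  have hmapsmul : ∀ (r : k) (M : Matrix (Fin d) (Fin d) k),
      (r • M).map (CC : k → k[X]) = Polynomial.C r • M.map (CC : k → k[X]) := by
    intro r M
    ext i j
    simp [Matrix.map_apply, hCC, smul_eq_mul]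
  set Gp : Matrix (Fin d) (Fin d) k[X] := G.map CC with hGp
  set Ap : Matrix (Fin d) (Fin d) k[X] := A.map CC with hAp
  set Bp : Matrix (Fin d) (Fin d) k[X] := B.map CC with hBp
  set Mp : Matrix (Fin d) (Fin d) k[X] := (X : k[X]) • Bp + Ap with hMp
  set q : k[X] := Polynomial.C (n b) * X ^ 2 + Polynomial.C (QuadraticMap.polar n a b) * X
      + Polynomial.C (n a) with hq
  have hGA' : Apᵀ * Gp * Ap = Polynomial.C (n a) • Gp := by
    have h := congrArg (fun M : Matrix (Fin d) (Fin d) k => M.map (CC : k → k[X])) hGA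
    simp only [Matrix.map_mul, hmapsmul] at h
    rwa [Matrix.transpose_map] at h
  have hGB' : Bpᵀ * Gp * Bp = Polynomial.C (n b) • Gp := by
    have h := congrArg (fun M : Matrix (Fin d) (Fin d) k => M.map (CC : k → k[X])) hGB
    simp only [Matrix.map_mul, hmapsmul] at h
    rwa [Matrix.transpose_map] at h
  have hmapadd : ∀ (M N : Matrix (Fin d) (Fin d) k),
      (M + N).map (CC : k → k[X]) = M.map (CC : k → k[X]) + N.map (CC : k → k[X]) := by
    intro M N; ext i j; simp [Matrix.map_apply]
  have hGAB' : Apᵀ * Gp * Bp + Bpᵀ * Gp * Ap = Polynomial.C (QuadraticMap.polar n a b) • Gp := by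
    have h := congrArg (fun M : Matrix (Fin d) (Fin d) k => M.map (CC : k → k[X])) hGAB
    simp only [hmapadd, Matrix.map_mul, hmapsmul] at h
    rwa [Matrix.transpose_map, Matrix.transpose_map] at h
  have key : Mpᵀ * Gp * Mp = q • Gp := by
    have expand : Mpᵀ * Gp * Mp
        = ((X : k[X]) * X) • (Bpᵀ * Gp * Bp) + (X : k[X]) • (Bpᵀ * Gp * Ap + Apᵀ * Gp * Bp)
          + (Apᵀ * Gp * Ap) := by
      rw [hMp]
      simp only [Matrix.transpose_add, Matrix.transpose_smul, add_mul, mul_add,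
        Matrix.smul_mul, Matrix.mul_smul, smul_add, smul_smul]
      abel
    rw [expand, add_comm (Bpᵀ * Gp * Ap), hGA', hGB', hGAB', hq]
    rw [smul_smul, smul_smul, ← add_smul, ← add_smul]
    congr 1
    ring
  -- determinants
  have hcard : Fintype.card (Fin d) = d := Fintype.card_fin d
  have hdet : Mp.det ^ 2 * Polynomial.C G.det = q ^ d * Polynomial.C G.det := by
    have h1 := congrArg Matrix.det key
    rw [Matrix.det_mul, Matrix.det_mul, Matrix.det_transpose, Matrix.det_smul, hcard] at h1
    have h2 : Gp.det = Polynomial.C G.det := (RingHom.map_det CC G).symm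
    rw [h2] at h1
    linear_combination h1
  have hdet2 : Mp.det ^ 2 = q ^ d := by
    have hC : (Polynomial.C G.det : k[X]) ≠ 0 := by
      simpa using hdetG
    exact mul_right_cancel₀ hC hdet
  have hsq : Mp.det ^ 2 = (q ^ m) ^ 2 := by
    rw [hdet2, ← pow_mul, hm2]
  have hfac : (Mp.det - q ^ m) * (Mp.det + q ^ m) = 0 := by
    linear_combination hsq
  -- q data
  have hqdeg : q.natDegree = 2 := Polynomial.natDegree_quadratic hb
  have hqlead : q.leadingCoeff = n b := Polynomial.leadingCoeff_quadratic hb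
  have hqm_deg : (q ^ m).natDegree = d := by
    rw [Polynomial.natDegree_pow, hqdeg, hm2]
  have hqm_lead : (q ^ m).coeff d = n b ^ m := by
    rw [← hqm_deg, Polynomial.coeff_natDegree, Polynomial.leadingCoeff_pow, hqlead]
  have hqm_zero : (q ^ m).coeff 0 = n a ^ m := by
    rw [Polynomial.coeff_zero_eq_eval_zero]
    simp [hq]
  have e0 : Mp.det.coeff 0 = A.det := Polynomial.coeff_det_X_add_C_zero B A
  have ed : Mp.det.coeff d = B.det := by
    have := Polynomial.coeff_det_X_add_C_card B A
    rwa [hcard] at this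
  have hdetA : LinearMap.det (mul a) = A.det := (LinearMap.det_toMatrix bs (mul a)).symm
  have hdetB : LinearMap.det (mul b) = B.det := (LinearMap.det_toMatrix bs (mul b)).symm
  rcases mul_eq_zero.mp hfac with h | h
  · -- proper case : det = q^m
    have h' : Mp.det = q ^ m := sub_eq_zero.mp h
    have hAeq : LinearMap.det (mul a) = n a ^ m := by
      rw [hdetA, ← e0, h', hqm_zero]
    have hBeq : LinearMap.det (mul b) = n b ^ m := by
      rw [hdetB, ← ed, h', hqm_lead]
    simp [hAeq, hBeq]
  · have h' : Mp.det = -(q ^ m) := eq_neg_of_add_eq_zero_left h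
    have hAeq : LinearMap.det (mul a) = -(n a ^ m) := by
      rw [hdetA, ← e0, h', Polynomial.coeff_neg, hqm_zero]
    have hBeq : LinearMap.det (mul b) = -(n b ^ m) := by
      rw [hdetB, ← ed, h', Polynomial.coeff_neg, hqm_lead]
    have hfalse : ∀ (c : C), n c ≠ 0 → LinearMap.det (mul c) = -(n c ^ m) →
        ¬ (LinearMap.det (mul c) = n c ^ m) := by
      intro c hc hneg hpos
      have h2 : (2 : k) * (n c ^ m) = 0 := by
        rw [hpos] at hneg
        linear_combination hneg
      rcases mul_eq_zero.mp h2 with h3 | h3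
      · exact hchar h3
      · exact pow_ne_zero m hc h3
    exact iff_of_false (hfalse a ha hAeq) (hfalse b hb hBeq)

theorem stmt18 {k C : Type*} [Field k] (hchar : (2 : k) ≠ 0)
    [AddCommGroup C] [Module k C] [FiniteDimensional k C]
    (heven : Even (Module.finrank k C))
    (n : QuadraticForm k C)
    (hnd : ∀ x : C, (∀ y : C, QuadraticMap.polar n x y = 0) → x = 0)
    (mul : C →ₗ[k] C →ₗ[k] C)
    (hcomp : ∀ x y : C, n (mul x y) = n x * n y)
    (a b : C) (ha : n a ≠ 0) (hb : n b ≠ 0) :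
    ((LinearMap.det (mul a) = n a ^ (Module.finrank k C / 2)) ↔
      (LinearMap.det (mul b) = n b ^ (Module.finrank k C / 2))) ∧
    ((LinearMap.det (mul.flip a) = n a ^ (Module.finrank k C / 2)) ↔
      (LinearMap.det (mul.flip b) = n b ^ (Module.finrank k C / 2))) := by
  refine ⟨comp_sign_aux hchar heven n hnd mul hcomp a b ha hb, ?_⟩
  exact comp_sign_aux hchar heven n hnd mul.flip
    (fun x y => by simpa [mul_comm] using hcomp y x) a b ha hb
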